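/- Let V and W be complex Banach spaces. Let A : ℝ → (V →L[ℂ] V), B : ℝ → (W →L[ℂ] V), C : ℝ → (V →L[ℂ] W), D : ℝ → (W →L[ℂ] W) be families of bounded linear operators. Suppose Q : ℝ → (V →L[ℂ] V), P : ℝ → (V →L[ℂ] W) and G : ℝ → (V →L[ℂ] W) satisfy, for every t in an open interval I: HasDerivAt Q (A t ∘ Q t + B t ∘ P t) t and HasDerivAt P (C t ∘ Q t + D t ∘ P t) t (derivatives in operator norm), the Riccati relation P t = G t ∘ Q t, and Q t is invertible in the Banach algebra V →L[ℂ] V. Then for every t ∈ I, G satisfies HasDerivAt G (C t + D t ∘ G t - G t ∘ (A t + B t ∘ G t)) t. -/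

import Mathlib

/-- Composition of `ℂ`-linear continuous operators is a bounded `ℝ`-bilinear map. -/
lemma comp_isBoundedBilinearMap_real
    {U V W : Type*} [NormedAddCommGroup U] [NormedSpace ℂ U]
    [NormedAddCommGroup V] [NormedSpace ℂ V]
    [NormedAddCommGroup W] [NormedSpace ℂ W] :
    IsBoundedBilinearMap ℝ
      (fun p : ((V →L[ℂ] W) × (U →L[ℂ] V)) => p.1.comp p.2) where
  add_left f f' g := by ext v; simp
  smul_left r f g := by ext v; simp
  add_right f g g' := by ext v; simp
  smul_right r f g := by ext v; simp
  bound := ⟨1, one_pos, fun f g => by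
    simpa using ContinuousLinearMap.opNorm_comp_le f g⟩

/-- Real-time product rule for pointwise composition of `ℂ`-linear operators. -/
lemma HasDerivAt.clm_comp_real
    {U V W : Type*} [NormedAddCommGroup U] [NormedSpace ℂ U]
    [NormedAddCommGroup V] [NormedSpace ℂ V]
    [NormedAddCommGroup W] [NormedSpace ℂ W]
    {c : ℝ → V →L[ℂ] W} {c' : V →L[ℂ] W} {d : ℝ → U →L[ℂ] V} {d' : U →L[ℂ] V} {x : ℝ}
    (hc : HasDerivAt c c' x) (hd : HasDerivAt d d' x) :
    HasDerivAt (fun y => (c y).comp (d y)) (c'.comp (d x) + (c x).comp d') x := by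
  have hbil := (comp_isBoundedBilinearMap_real (U := U) (V := V) (W := W)).hasFDerivAt
    (c x, d x)
  have h := hbil.comp_hasDerivAt x (hc.prodMk hd)
  simpa [IsBoundedBilinearMap.deriv_apply, Function.comp_def, add_comm] using h

/-- Operator version of the forward Grassmannian projection: if bounded-operator
families `Q`, `P` solve the base and auxiliary equations `∂ₜQ = A∘Q + B∘P`,
`∂ₜP = C∘Q + D∘P` on an open interval on which `Q t` is invertible, and `G`
satisfies the Riccati relation `P = G ∘ Q` there, then `G` solves the operator
Riccati evolution equation `∂ₜG = C + D∘G − G∘(A + B∘G)`. -/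
theorem operator_riccati_of_linear_flow
    {V W : Type*} [NormedAddCommGroup V] [NormedSpace ℂ V] [CompleteSpace V]
    [NormedAddCommGroup W] [NormedSpace ℂ W] [CompleteSpace W]
    (A : ℝ → V →L[ℂ] V) (B : ℝ → W →L[ℂ] V)
    (C : ℝ → V →L[ℂ] W) (D : ℝ → W →L[ℂ] W)
    (Q : ℝ → V →L[ℂ] V) (P G : ℝ → V →L[ℂ] W)
    (I : Set ℝ) (hI : IsOpen I)
    (hQ : ∀ t ∈ I, HasDerivAt Q ((A t).comp (Q t) + (B t).comp (P t)) t)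
    (hP : ∀ t ∈ I, HasDerivAt P ((C t).comp (Q t) + (D t).comp (P t)) t)
    (hric : ∀ t ∈ I, P t = (G t).comp (Q t))
    (hinv : ∀ t ∈ I, IsUnit (Q t)) :
    ∀ t ∈ I,
      HasDerivAt G (C t + (D t).comp (G t) - (G t).comp (A t + (B t).comp (G t))) t := by
  -- On `I`, `G x = P x ∘ (Q x)⁻¹`.
  have hGeq : ∀ x ∈ I, G x = (P x).comp (Ring.inverse (Q x)) := by
    intro x hx
    have hx1 : Q x * Ring.inverse (Q x) = 1 := Ring.mul_inverse_cancel _ (hinv x hx)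
    rw [hric x hx]
    ext v
    have hv := DFunLike.congr_fun hx1 v
    simp only [ContinuousLinearMap.mul_apply, ContinuousLinearMap.one_apply] at hv
    simp [ContinuousLinearMap.comp_apply, hv]
  intro t ht
  obtain ⟨u, hu⟩ := hinv t ht
  have hinv_eq : Ring.inverse (Q t) = (↑u⁻¹ : V →L[ℂ] V) := by
    rw [← hu, Ring.inverse_unit]
  -- derivative of `Ring.inverse ∘ Q` (restricting scalars from ℂ to ℝ)
  have hder_inv : HasDerivAt (fun x => Ring.inverse (Q x))
      (-(Ring.inverse (Q t) * ((A t).comp (Q t) + (B t).comp (P t)) * Ring.inverse (Q t))) t := by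
    have h1 := (hasFDerivAt_ringInverse (𝕜 := ℂ) u).restrictScalars ℝ
    rw [hu] at h1
    have h2 := h1.comp_hasDerivAt t (hQ t ht)
    simpa [hinv_eq, ContinuousLinearMap.mulLeftRight_apply, Function.comp_def] using h2
  -- derivative of `x ↦ P x ∘ Ring.inverse (Q x)`
  have hH := (hP t ht).clm_comp_real hder_inv
  have hQinv : (Q t).comp (Ring.inverse (Q t)) = (1 : V →L[ℂ] V) := by
    rw [hinv_eq, ← hu, ← ContinuousLinearMap.mul_def, Units.mul_inv]
  -- identify the derivative with the Riccati right-hand side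
  have hkey :
      ((C t).comp (Q t) + (D t).comp (P t)).comp (Ring.inverse (Q t)) +
        (P t).comp (-(Ring.inverse (Q t) * ((A t).comp (Q t) + (B t).comp (P t)) *
          Ring.inverse (Q t)))
      = C t + (D t).comp (G t) - (G t).comp (A t + (B t).comp (G t)) := by
    have hG : G t = (P t).comp (Ring.inverse (Q t)) := hGeq t ht
    have hQi : ∀ y : V, (Q t) ((Ring.inverse (Q t)) y) = y := fun y => by
      have := congrArg (fun (f : V →L[ℂ] V) => f y) hQinv
      simpa using this
    ext v
    simp only [ContinuousLinearMap.add_apply, ContinuousLinearMap.comp_apply,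
      ContinuousLinearMap.sub_apply, ContinuousLinearMap.neg_apply, hG,
      ContinuousLinearMap.mul_apply, map_add, map_neg]
    simp [hQi]
    abel
  have hH' : HasDerivAt (fun x => (P x).comp (Ring.inverse (Q x)))
      (C t + (D t).comp (G t) - (G t).comp (A t + (B t).comp (G t))) t := by
    rw [← hkey]; exact hH
  refine hH'.congr_of_eventuallyEq ?_
  filter_upwards [hI.mem_nhds ht] with x hx
  exact hGeq x hx
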